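/- Let b be a real number and for integers n ≥ 3 define v_n(3/2,b) = (∑_{k=1}^{n−2} 1/k) + ((3/2)·n+b)/(n(n−1)) − ln n. If b ≠ −5/12, then lim_{n→∞} n²·(v_n(3/2,b) − γ) = b + 5/12, which is nonzero; in particular (v_n(3/2,b))_{n≥3} converges to γ with rate of convergence exactly n^{−2}. -/

import Mathlib

open Filter Topology Real

noncomputable def v (a b : ℝ) (n : ℕ) : ℝ :=
  (∑ k ∈ Finset.Icc 1 (n - 2), (1 : ℝ) / k) + (a * n + b) / ((n : ℝ) * ((n : ℝ) - 1))
    - Real.log n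

lemma log_cubic_upper {x : ℝ} (hx : 0 ≤ x) :
    Real.log (1 + x) ≤ x - x^2/2 + x^3/3 := by
  have key : MonotoneOn (fun t : ℝ => t - t^2/2 + t^3/3 - Real.log (1+t)) (Set.Ici 0) := by
    apply monotoneOn_of_hasDerivWithinAt_nonneg (f' := fun t => t^3/(1+t)) (convex_Ici 0)
    · apply ContinuousOn.sub
      · fun_prop
      · apply ContinuousOn.log (by fun_prop)
        intro t ht
        simp only [Set.mem_Ici] at ht; positivity
    · intro t ht
      rw [interior_Ici] at ht
      simp only [Set.mem_Ioi] at ht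
      have h1 : HasDerivAt (fun s : ℝ => Real.log (1+s)) (1/(1+t)) t := by
        have := (Real.hasDerivAt_log (by linarith : (1:ℝ)+t ≠ 0)).comp t
          ((hasDerivAt_id t).const_add 1)
        simpa [Function.comp_def] using this
      have h2 : HasDerivAt (fun s : ℝ => s - s^2/2 + s^3/3) (1 - t + t^2) t := by
        have := ((hasDerivAt_id t).sub ((hasDerivAt_pow 2 t).div_const 2)).add
          ((hasDerivAt_pow 3 t).div_const 3)
        refine this.congr_deriv ?_
        push_cast; ring
      have := (h2.sub h1).hasDerivWithinAt (s := interior (Set.Ici (0:ℝ)))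
      refine this.congr_deriv ?_
      field_simp
      ring
    · intro t ht
      rw [interior_Ici] at ht
      simp only [Set.mem_Ioi] at ht
      positivity
  have h0 := key (Set.self_mem_Ici) (Set.mem_Ici.2 hx) hx
  norm_num at h0
  linarith

lemma log_quartic_lower {x : ℝ} (hx : 0 ≤ x) :
    x - x^2/2 + x^3/3 - x^4/4 ≤ Real.log (1 + x) := by
  have key : MonotoneOn (fun t : ℝ => Real.log (1+t) - (t - t^2/2 + t^3/3 - t^4/4)) (Set.Ici 0) := by
    apply monotoneOn_of_hasDerivWithinAt_nonneg (f' := fun t => t^4/(1+t)) (convex_Ici 0)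
    · apply ContinuousOn.sub
      · apply ContinuousOn.log (by fun_prop)
        intro t ht
        simp only [Set.mem_Ici] at ht; positivity
      · fun_prop
    · intro t ht
      rw [interior_Ici] at ht
      simp only [Set.mem_Ioi] at ht
      have h1 : HasDerivAt (fun s : ℝ => Real.log (1+s)) (1/(1+t)) t := by
        have := (Real.hasDerivAt_log (by linarith : (1:ℝ)+t ≠ 0)).comp t
          ((hasDerivAt_id t).const_add 1)
        simpa [Function.comp_def] using this
      have h2 : HasDerivAt (fun s : ℝ => s - s^2/2 + s^3/3 - s^4/4) (1 - t + t^2 - t^3) t := by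
        have := (((hasDerivAt_id t).sub ((hasDerivAt_pow 2 t).div_const 2)).add
          ((hasDerivAt_pow 3 t).div_const 3)).sub ((hasDerivAt_pow 4 t).div_const 4)
        refine this.congr_deriv ?_
        push_cast; ring
      have := (h1.sub h2).hasDerivWithinAt (s := interior (Set.Ici (0:ℝ)))
      refine this.congr_deriv ?_
      field_simp
      ring
    · intro t ht
      rw [interior_Ici] at ht
      simp only [Set.mem_Ioi] at ht
      positivity
  have h0 := key (Set.self_mem_Ici) (Set.mem_Ici.2 hx) hx
  norm_num at h0
  linarith

noncomputable def cc (n : ℕ) : ℝ := 1/(2*(n:ℝ)) - 1/(12*(n:ℝ)^2)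

noncomputable def ee (n : ℕ) : ℝ :=
  (harmonic n : ℝ) - Real.log n - Real.eulerMascheroniConstant - cc n

lemma cc_tendsto : Filter.Tendsto cc atTop (𝓝 0) := by
  have ha : Filter.Tendsto (fun n : ℕ => (n:ℝ)) atTop atTop := tendsto_natCast_atTop_atTop
  have hb : Filter.Tendsto (fun n : ℕ => 1/(2*(n:ℝ))) atTop (𝓝 0) :=
    tendsto_const_nhds.div_atTop (ha.const_mul_atTop two_pos)
  have hc : Filter.Tendsto (fun n : ℕ => 1/(12*(n:ℝ)^2)) atTop (𝓝 0) :=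
    tendsto_const_nhds.div_atTop
      (((tendsto_pow_atTop (two_ne_zero)).comp ha).const_mul_atTop (by norm_num))
  have h := hb.sub hc
  rw [sub_zero] at h
  exact h

lemma ee_tendsto : Filter.Tendsto ee atTop (𝓝 0) := by
  have h1 := Real.tendsto_harmonic_sub_log
  have h2 := (h1.sub (tendsto_const_nhds (x := Real.eulerMascheroniConstant))).sub cc_tendsto
  rw [sub_self, sub_zero] at h2
  exact h2

lemma ee_step (n : ℕ) (hn : 2 ≤ n) : |ee n - ee (n+1)| ≤ 1/(n:ℝ)^4 := by
  have hx : (2:ℝ) ≤ (n:ℝ) := by exact_mod_cast hn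
  set x : ℝ := (n:ℝ) with hxdef
  have hx0 : 0 < x := by linarith
  have hx1 : 0 < x + 1 := by linarith
  have hE : ee n - ee (n+1) = Real.log (1+1/x)
      - (1/(x+1) + (1/(2*x) - 1/(12*x^2)) - (1/(2*(x+1)) - 1/(12*(x+1)^2))) := by
    have hlog : Real.log (1 + 1/x) = Real.log (x+1) - Real.log x := by
      rw [← Real.log_div (ne_of_gt hx1) (ne_of_gt hx0)]
      congr 1
      field_simp
    simp only [ee, cc, harmonic_succ]
    push_cast
    rw [hlog]
    ring
  have hinv : (0:ℝ) ≤ 1/x := by positivity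
  have hup := log_cubic_upper hinv
  have hlo := log_quartic_lower hinv
  have hkey : (1/x - (1/x)^2/2 + (1/x)^3/3)
      - (1/(x+1) + (1/(2*x) - 1/(12*x^2)) - (1/(2*(x+1)) - 1/(12*(x+1)^2)))
      = (3*x+4)/(12*x^3*(x+1)^2) := by
    field_simp
    ring
  have hq1 : (0:ℝ) ≤ (3*x+4)/(12*x^3*(x+1)^2) := by positivity
  have hq2 : (3*x+4)/(12*x^3*(x+1)^2) ≤ 1/x^4 := by
    rw [div_le_div_iff₀ (by positivity) (by positivity)]
    have h' : x^3*(3*x^2+4*x) ≤ x^3*(12*(x+1)^2) := by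
      apply mul_le_mul_of_nonneg_left ?_ (by positivity)
      nlinarith
    nlinarith [h']
  have hq3 : (1/x)^4 = 1/x^4 := by rw [div_pow, one_pow]
  have hq4 : (0:ℝ) ≤ 1/x^4 := by positivity
  rw [hE, abs_le]
  constructor
  · nlinarith [hlo, hq1, hkey, hq3, hq4]
  · nlinarith [hup, hq2, hkey]

lemma ee_tail (n : ℕ) (hn : 2 ≤ n) : ∀ M, n ≤ M →
    |ee n - ee M| ≤ 1/(3*((n:ℝ)-1)^3) - 1/(3*((M:ℝ)-1)^3) := by
  intro M hM
  induction M, hM using Nat.le_induction with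
  | base => simp
  | succ M hM ih =>
    have hM2 : (2:ℝ) ≤ (M:ℝ) := by exact_mod_cast le_trans hn hM
    have h1 := ee_step M (le_trans hn hM)
    have htri := abs_sub_le (ee n) (ee M) (ee (M+1))
    have hM1 : (0:ℝ) < (M:ℝ) - 1 := by linarith
    have hM0 : (0:ℝ) < (M:ℝ) := by linarith
    have hd1 : (0:ℝ) < 3*((M:ℝ)-1)^3 := by positivity
    have hd2 : (0:ℝ) < 3*(M:ℝ)^3 := by positivity
    have hstep2 : 1/(M:ℝ)^4 ≤ 1/(3*((M:ℝ)-1)^3) - 1/(3*(M:ℝ)^3) := by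
      rw [div_sub_div _ _ (ne_of_gt hd1) (ne_of_gt hd2),
        div_le_div_iff₀ (by positivity) (by positivity)]
      nlinarith [sq_nonneg ((M:ℝ)-1), pow_pos hM1 3, pow_pos hM0 4, sq_nonneg (M:ℝ),
        mul_pos hd1 hd2]
    push_cast
    rw [add_sub_cancel_right]
    linarith

lemma ee_bound (n : ℕ) (hn : 2 ≤ n) : |ee n| ≤ 1/(3*((n:ℝ)-1)^3) := by
  have h : Filter.Tendsto (fun M => |ee n - ee M|) atTop (𝓝 |ee n - 0|) :=
    (tendsto_const_nhds.sub ee_tendsto).abs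
  rw [sub_zero] at h
  refine le_of_tendsto h ?_
  filter_upwards [Filter.eventually_ge_atTop n, Filter.eventually_ge_atTop 2] with M hM hM2
  refine le_trans (ee_tail n hn M hM) ?_
  have hM2' : (2:ℝ) ≤ (M:ℝ) := by exact_mod_cast hM2
  have : (0:ℝ) < (M:ℝ) - 1 := by linarith
  have : (0:ℝ) ≤ 1/(3*((M:ℝ)-1)^3) := by positivity
  linarith

lemma sq_ee : Filter.Tendsto (fun n : ℕ => (n:ℝ)^2 * ee n) atTop (𝓝 0) := by
  apply squeeze_zero_norm' (a := fun n : ℕ => 8/(3*(n:ℝ)))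
  · filter_upwards [Filter.eventually_ge_atTop 2] with n hn
    have hn2 : (2:ℝ) ≤ (n:ℝ) := by exact_mod_cast hn
    have hb := ee_bound n hn
    have h1 : (0:ℝ) < (n:ℝ) - 1 := by linarith
    rw [Real.norm_eq_abs, abs_mul, abs_of_nonneg (by positivity : (0:ℝ) ≤ (n:ℝ)^2)]
    have h2 : (n:ℝ)^2 * |ee n| ≤ (n:ℝ)^2 * (1/(3*((n:ℝ)-1)^3)) :=
      mul_le_mul_of_nonneg_left hb (by positivity)
    refine le_trans h2 ?_
    rw [mul_one_div, div_le_div_iff₀ (by positivity) (by positivity)]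
    nlinarith [pow_pos h1 3, sq_nonneg ((n:ℝ)-2), pow_pos (show (0:ℝ) < (n:ℝ) by linarith) 2]
  · exact tendsto_const_nhds.div_atTop (tendsto_natCast_atTop_atTop.const_mul_atTop (by norm_num))

lemma harm_split (m : ℕ) :
    (∑ k ∈ Finset.Icc 1 (m+1), (1 : ℝ) / k)
      = (harmonic (m+3) : ℝ) - 1/((m:ℝ)+3) - 1/((m:ℝ)+2) := by
  have h2 : harmonic (m+3) = harmonic (m+1) + ((m:ℚ)+2)⁻¹ + ((m:ℚ)+3)⁻¹ := by
    show harmonic (m+1+1+1) = _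
    rw [harmonic_succ, harmonic_succ]
    push_cast
    ring
  have h3 : ((harmonic (m+1) : ℚ) : ℝ) = ∑ k ∈ Finset.Icc 1 (m+1), (1:ℝ)/k := by
    rw [harmonic_eq_sum_Icc]
    push_cast
    simp [one_div]
  rw [h2]
  push_cast
  rw [h3]
  ring

theorem rate_two (b : ℝ) (hb : b ≠ -(5 / 12)) :
    Tendsto (fun n : ℕ => (n : ℝ) ^ 2 * (v (3 / 2) b n - Real.eulerMascheroniConstant)) atTop
      (𝓝 (b + 5 / 12)) ∧ b + 5 / 12 ≠ 0 := by
  constructor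
  · have hL : Filter.Tendsto (fun n : ℕ => (n:ℝ)/((n:ℝ)-1)) atTop (𝓝 1) := by
      have h1 : Filter.Tendsto (fun n : ℕ => (n:ℝ)-1) atTop atTop := by
        have := Filter.tendsto_atTop_add_const_right atTop (-1:ℝ) tendsto_natCast_atTop_atTop
        simpa [sub_eq_add_neg] using this
      have h2 : Filter.Tendsto (fun n : ℕ => 1/((n:ℝ)-1)) atTop (𝓝 0) :=
        tendsto_const_nhds.div_atTop h1
      have heq : (fun n : ℕ => 1 + 1/((n:ℝ)-1)) =ᶠ[atTop] fun n : ℕ => (n:ℝ)/((n:ℝ)-1) := by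
        filter_upwards [Filter.eventually_ge_atTop 2] with n hn
        have hn2 : (2:ℝ) ≤ (n:ℝ) := by exact_mod_cast hn
        have : (n:ℝ) - 1 ≠ 0 := by linarith
        field_simp
        ring
      have h3 := (tendsto_const_nhds (x := (1:ℝ))).add h2
      rw [add_zero] at h3
      exact h3.congr' heq
    have h4 := sq_ee.add ((hL.const_mul (b+1/2)).sub_const (1/12))
    have h5 : (0:ℝ) + ((b+1/2)*1 - 1/12) = b + 5/12 := by ring
    rw [h5] at h4
    refine h4.congr' ?_
    filter_upwards [Filter.eventually_ge_atTop 3] with n hn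
    obtain ⟨m, rfl⟩ : ∃ m, n = m+3 := ⟨n-3, by omega⟩
    have hsplit := harm_split m
    have hnum : (m+3 : ℕ) - 2 = m + 1 := by omega
    have hx0 : (0:ℝ) < (m:ℝ)+3 := by positivity
    have hx1 : (0:ℝ) < (m:ℝ)+2 := by positivity
    simp only [v, ee, cc, hnum]
    push_cast
    push_cast at hsplit
    rw [hsplit]
    have hc3 : ((m:ℝ)+3) - 1 = (m:ℝ)+2 := by ring
    rw [hc3]
    field_simp
    ring
  · intro h
    apply hb
    linarith
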